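/- arXiv:1810.10580 — 3 statements merged into one kernel-verified Lean document; each statement's English description precedes it below -/
import Mathlib

section
/- Let R be a commutative Artinian ring with unit and let G be an abelian group in which every element has finite order (equivalently, G is locally finite abelian), such that the order of every element of G is invertible in R/J(R), where J(R) is the Jacobson radical of R. Then the Jacobson radical of the group algebra RG equals the ideal J(R)·RG generated by J(R), and this ideal is nilpotent. -/
open Finsupp

section MapCoeff

variable {k R : Type*} [CommRing k] [CommRing R] {G : Type*} [CommGroup G]

/-- The ring hom `MonoidAlgebra k G →+* MonoidAlgebra R G` induced by `f : k →+* R`. -/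
noncomputable def mapCoeffHom (f : k →+* R) : MonoidAlgebra k G →+* MonoidAlgebra R G :=
  MonoidAlgebra.liftNCRingHom (MonoidAlgebra.singleOneRingHom.comp f) (MonoidAlgebra.of R G)
    fun _ _ => Commute.all _ _

lemma mapCoeffHom_single (f : k →+* R) (a : G) (b : k) :
    mapCoeffHom f (MonoidAlgebra.single a b) = MonoidAlgebra.single a (f b) := by
  show MonoidAlgebra.liftNC _ _ _ = _
  rw [MonoidAlgebra.liftNC_single]
  show MonoidAlgebra.single 1 (f b) * MonoidAlgebra.single a 1 = _
  rw [MonoidAlgebra.single_mul_single, one_mul, mul_one]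

lemma mapCoeffHom_apply (f : k →+* R) (x : MonoidAlgebra k G) :
    mapCoeffHom f x = MonoidAlgebra.ofCoeff (Finsupp.mapRange f f.map_zero x.coeff) := by
  induction x using MonoidAlgebra.induction_linear with
  | zero => simp
  | add u v hu hv =>
      rw [map_add, hu, hv, MonoidAlgebra.coeff_add, Finsupp.mapRange_add (by exact f.map_add),
        MonoidAlgebra.ofCoeff_add]
  | single a b =>
      rw [mapCoeffHom_single]
      rw [MonoidAlgebra.coeff_single, Finsupp.mapRange_single, MonoidAlgebra.ofCoeff_single]

lemma mapCoeffHom_coeff (f : k →+* R) (x : MonoidAlgebra k G) (g : G) :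
    (mapCoeffHom f x).coeff g = f (x.coeff g) := by
  rw [mapCoeffHom_apply, MonoidAlgebra.coeff_ofCoeff, Finsupp.mapRange_apply]

lemma mapCoeffHom_surjective {f : k →+* R} (hf : Function.Surjective f) :
    Function.Surjective (mapCoeffHom f (G := G)) := by
  intro y
  induction y using MonoidAlgebra.induction_linear with
  | zero => exact ⟨0, map_zero _⟩
  | add u v hu hv =>
      obtain ⟨a, rfl⟩ := hu; obtain ⟨b, rfl⟩ := hv; exact ⟨a + b, map_add _ _ _⟩
  | single a b =>
      obtain ⟨c, rfl⟩ := hf b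
      exact ⟨MonoidAlgebra.single a c, mapCoeffHom_single f a c⟩

end MapCoeff

/-- A surjective ring hom maps the Jacobson radical into the Jacobson radical. -/
lemma jacobson_push {A B : Type*} [CommRing A] [CommRing B] (f : A →+* B)
    (hf : Function.Surjective f) {x : A} (hx : x ∈ (⊥ : Ideal A).jacobson) :
    f x ∈ (⊥ : Ideal B).jacobson := by
  rw [Ideal.mem_jacobson_bot] at hx ⊢
  intro y
  obtain ⟨z, rfl⟩ := hf y
  have := (hx z).map f
  simpa using this

/-- In an integral extension with injective structure map, units descend. -/
lemma isUnit_of_isUnit_algebraMap {A B : Type*} [CommRing A] [CommRing B] [Algebra A B]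
    [Algebra.IsIntegral A B] (hinj : Function.Injective (algebraMap A B)) {a : A}
    (ha : IsUnit (algebraMap A B a)) : IsUnit a := by
  by_contra h
  obtain ⟨M, hM, hle⟩ := Ideal.exists_le_maximal (Ideal.span {a})
    (fun htop => h (Ideal.span_singleton_eq_top.mp htop))
  have hker : RingHom.ker (algebraMap A B) ≤ M := by
    rw [(RingHom.injective_iff_ker_eq_bot _).mp hinj]; exact bot_le
  obtain ⟨Q, hQ, hQc⟩ := Ideal.exists_ideal_over_maximal_of_isIntegral M hker
  have haM : a ∈ M := hle (Ideal.subset_span rfl)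
  have haQ : algebraMap A B a ∈ Q := by rw [← hQc] at haM; exact haM
  exact hQ.ne_top (Q.eq_top_of_isUnit_mem haQ ha)

/-- Every element of the monoid algebra of a torsion commutative group is integral
over the base ring. -/
lemma monoidAlgebra_isIntegral {k : Type*} [CommRing k] {G : Type*} [CommGroup G]
    (hfin : ∀ g : G, IsOfFinOrder g) (x : MonoidAlgebra k G) : IsIntegral k x := by
  have key : ∀ g : G, MonoidAlgebra.single g (1 : k) ∈
      integralClosure k (MonoidAlgebra k G) := by
    intro g
    show IsIntegral k (MonoidAlgebra.single g (1 : k))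
    refine ⟨Polynomial.X ^ (orderOf g) - Polynomial.C 1,
      Polynomial.monic_X_pow_sub_C 1 (hfin g).orderOf_pos.ne', ?_⟩
    have h1 : (MonoidAlgebra.single g (1 : k)) ^ (orderOf g) = 1 := by
      rw [MonoidAlgebra.single_pow, one_pow, pow_orderOf_eq_one, MonoidAlgebra.one_def]
    rw [Polynomial.C_1, Polynomial.eval₂_sub, Polynomial.eval₂_X_pow, Polynomial.eval₂_one,
      h1, sub_self]
  have hx : x ∈ integralClosure k (MonoidAlgebra k G) := by
    have hrepr : x = x.coeff.sum MonoidAlgebra.single := (MonoidAlgebra.sum_coeff_single x).symm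
    rw [hrepr, Finsupp.sum]
    refine Subalgebra.sum_mem _ fun g _ => ?_
    have hsingle : (MonoidAlgebra.single g (x.coeff g) : MonoidAlgebra k G) =
        MonoidAlgebra.single 1 (x.coeff g) * MonoidAlgebra.single g 1 := by
      rw [MonoidAlgebra.single_mul_single, one_mul, mul_one]
    rw [hsingle]
    refine mul_mem ?_ (key g)
    have halg : MonoidAlgebra.single (1 : G) (x.coeff g) = algebraMap k (MonoidAlgebra k G) (x.coeff g) := by
      rw [MonoidAlgebra.coe_algebraMap]; simp
    rw [halg]
    exact Subalgebra.algebraMap_mem _ _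
  exact hx

/-- A (commutative) semisimple ring has trivial Jacobson radical. -/
lemma jacobson_bot_of_semisimple (A : Type*) [CommRing A] [IsSemisimpleRing A] :
    (⊥ : Ideal A).jacobson = ⊥ := by
  obtain ⟨C, hC⟩ := exists_isCompl ((⊥ : Ideal A).jacobson : Submodule A A)
  have h1 : (1 : A) ∈ ((⊥ : Ideal A).jacobson ⊔ C) := by
    rw [hC.sup_eq_top]; trivial
  obtain ⟨e, he, f, hf, hef⟩ := Submodule.mem_sup.mp h1
  have hu : IsUnit f := by
    have h := Ideal.mem_jacobson_bot.mp he (-1)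
    have hfe : e * -1 + 1 = f := by linear_combination -hef
    rwa [hfe] at h
  have hCtop : (C : Ideal A) = ⊤ := Ideal.eq_top_of_isUnit_mem C hf hu
  have hinf := hC.inf_eq_bot
  rw [hCtop, inf_top_eq] at hinf
  exact hinf

section FieldCase

universe u v

/-- Jacobson semisimplicity of the group algebra of a torsion commutative group over a
field in which all element orders are invertible: same-universe version. -/
lemma jacobson_bot_monoidAlgebra_field {k : Type u} [Field k] {G : Type u} [CommGroup G]
    (hfin : ∀ g : G, IsOfFinOrder g) (hord : ∀ g : G, ((orderOf g : ℕ) : k) ≠ 0) :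
    (⊥ : Ideal (MonoidAlgebra k G)).jacobson = ⊥ := by
  refine eq_bot_iff.mpr fun y hy => ?_
  set H : Subgroup G := Subgroup.closure (y.coeff.support : Set G) with hH
  haveI : Group.FG H := Group.closure_finset_fg y.coeff.support
  haveI : Finite H := CommGroup.finite_of_fg_torsion H (IsTorsion.subgroup hfin H)
  haveI : Fintype H := Fintype.ofFinite H
  -- the order of every element of H, viewed in k, is nonzero
  have hordH : ∀ h : H, ((orderOf h : ℕ) : k) ≠ 0 := by
    intro h
    rw [← orderOf_injective H.subtype H.subtype_injective h]
    exact hord _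
  -- the cardinality of H is invertible in k
  have hcard : ((Fintype.card H : ℕ) : k) ≠ 0 := by
    intro h0
    haveI := ringChar.charP k
    have hdvd : ringChar k ∣ Fintype.card H := (ringChar.spec k _).mp h0
    rcases CharP.char_is_prime_or_zero k (ringChar k) with hp | hp
    · haveI : Fact (Nat.Prime (ringChar k)) := ⟨hp⟩
      obtain ⟨x, hx⟩ := exists_prime_orderOf_dvd_card (G := H) (ringChar k) hdvd
      have hne := hordH x
      rw [hx] at hne
      exact hne (ringChar.Nat.cast_ringChar (R := k))
    · rw [hp, zero_dvd_iff] at hdvd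
      exact (Fintype.card_pos (α := H)).ne' hdvd
  haveI : NeZero ((Fintype.card H : ℕ) : k) := ⟨hcard⟩
  haveI : IsSemisimpleRing (MonoidAlgebra k H) := by
    haveI : NeZero ((Nat.card H : ℕ) : k) := ⟨by rw [Nat.card_eq_fintype_card]; exact hcard⟩
    infer_instance
  -- realize y as coming from `MonoidAlgebra k H`
  set ι : MonoidAlgebra k H →+* MonoidAlgebra k G :=
    MonoidAlgebra.mapDomainRingHom k H.subtype with hι
  have hιfun : ∀ z : MonoidAlgebra k H, ι z = MonoidAlgebra.mapDomain (⇑H.subtype) z :=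
    fun z => rfl
  have hιinj : Function.Injective ι := by
    intro a b hab
    rw [hιfun, hιfun] at hab
    exact MonoidAlgebra.mapDomain_injective H.subtype_injective hab
  have hsupp : ↑y.coeff.support ⊆ Set.range (⇑H.subtype) := by
    intro g hg
    exact ⟨⟨g, Subgroup.subset_closure hg⟩, rfl⟩
  set y' : MonoidAlgebra k H :=
    MonoidAlgebra.comapDomain (⇑H.subtype) H.subtype_injective y with hy'def
  have hy' : ι y' = y := by
    rw [hιfun]
    exact MonoidAlgebra.mapDomain_comapDomain hsupp H.subtype_injective
  -- set up the integral algebra structure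
  letI : Algebra (MonoidAlgebra k H) (MonoidAlgebra k G) := ι.toAlgebra
  have halg : algebraMap (MonoidAlgebra k H) (MonoidAlgebra k G) = ι := rfl
  haveI : IsScalarTower k (MonoidAlgebra k H) (MonoidAlgebra k G) := by
    refine IsScalarTower.of_algebraMap_eq fun c => ?_
    rw [halg]
    rw [show (algebraMap k (MonoidAlgebra k G)) c = MonoidAlgebra.single 1 c by
      rw [MonoidAlgebra.coe_algebraMap]; simp]
    rw [show (algebraMap k (MonoidAlgebra k H)) c = MonoidAlgebra.single 1 c by
      rw [MonoidAlgebra.coe_algebraMap]; simp]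
    rw [hιfun, MonoidAlgebra.mapDomain_single, map_one]
  haveI : Algebra.IsIntegral (MonoidAlgebra k H) (MonoidAlgebra k G) :=
    ⟨fun x => (monoidAlgebra_isIntegral hfin x).tower_top⟩
  -- y' is in the Jacobson radical of `MonoidAlgebra k H`
  have hy'J : y' ∈ (⊥ : Ideal (MonoidAlgebra k H)).jacobson := by
    rw [Ideal.mem_jacobson_bot]
    intro z
    have hιinj' : Function.Injective (algebraMap (MonoidAlgebra k H) (MonoidAlgebra k G)) := by
      rw [halg]; exact hιinj
    refine isUnit_of_isUnit_algebraMap hιinj' ?_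
    rw [halg, map_add, map_mul, map_one, hy']
    exact Ideal.mem_jacobson_bot.mp hy (ι z)
  rw [jacobson_bot_of_semisimple] at hy'J
  rw [Ideal.mem_bot] at hy'J ⊢
  rw [← hy', hy'J, map_zero]

/-- Jacobson semisimplicity of the group algebra of a torsion commutative group over a
field in which all element orders are invertible: universe polymorphic version. -/
lemma jacobson_bot_monoidAlgebra_field' {k : Type u} [Field k] {G : Type v} [CommGroup G]
    (hfin : ∀ g : G, IsOfFinOrder g) (hord : ∀ g : G, ((orderOf g : ℕ) : k) ≠ 0) :
    (⊥ : Ideal (MonoidAlgebra k G)).jacobson = ⊥ := by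
  refine eq_bot_iff.mpr fun y hy => ?_
  have hinjU : Function.Injective ⇑((MulEquiv.ulift (α := G)).toMonoidHom) := by
    rw [MulEquiv.coe_toMonoidHom]; exact MulEquiv.ulift.injective
  have horder : ∀ g' : ULift.{u} G, orderOf (MulEquiv.ulift g') = orderOf g' := by
    intro g'
    have h := orderOf_injective (MulEquiv.ulift (α := G)).toMonoidHom hinjU g'
    simp only [MulEquiv.coe_toMonoidHom] at h
    exact h
  have hfin' : ∀ g' : ULift.{u} G, IsOfFinOrder g' := by
    intro g'
    by_contra hc
    have h0 : orderOf g' = 0 := orderOf_eq_zero_iff.mpr hc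
    have hpos := (hfin (MulEquiv.ulift g')).orderOf_pos
    rw [horder, h0] at hpos
    exact lt_irrefl 0 hpos
  have hord' : ∀ g' : ULift.{u} G, ((orderOf g' : ℕ) : ULift.{v} k) ≠ 0 := by
    intro g' h0
    have h1 : ((orderOf g' : ℕ) : k) ≠ 0 := by
      rw [← horder g']; exact hord _
    apply h1
    have := congrArg (ULift.ringEquiv (R := k)) h0
    rwa [map_natCast, map_zero] at this
  set Θ : MonoidAlgebra k G →+* MonoidAlgebra (ULift.{v} k) (ULift.{u} G) :=
    (MonoidAlgebra.mapDomainRingHom (ULift.{v} k)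
        (MulEquiv.ulift.symm.toMonoidHom : G →* ULift.{u} G)).comp
      (mapCoeffHom ((ULift.ringEquiv (R := k)).symm.toRingHom)) with hΘ
  set Θ' : MonoidAlgebra (ULift.{v} k) (ULift.{u} G) →+* MonoidAlgebra k G :=
    (MonoidAlgebra.mapDomainRingHom k
        (MulEquiv.ulift.toMonoidHom : ULift.{u} G →* G)).comp
      (mapCoeffHom ((ULift.ringEquiv (R := k)).toRingHom)) with hΘ'
  have hsingleΘ : ∀ (a : G) (b : k),
      Θ (MonoidAlgebra.single a b) =
        MonoidAlgebra.single (MulEquiv.ulift.symm a) ((ULift.ringEquiv (R := k)).symm b) := by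
    intro a b
    rw [hΘ, RingHom.comp_apply, mapCoeffHom_single]
    show MonoidAlgebra.mapDomain _ _ = _
    rw [MonoidAlgebra.mapDomain_single]
    rfl
  have hsingleΘ' : ∀ (a : ULift.{u} G) (b : ULift.{v} k),
      Θ' (MonoidAlgebra.single a b) =
        MonoidAlgebra.single (MulEquiv.ulift a) ((ULift.ringEquiv (R := k)) b) := by
    intro a b
    rw [hΘ', RingHom.comp_apply, mapCoeffHom_single]
    show MonoidAlgebra.mapDomain _ _ = _
    rw [MonoidAlgebra.mapDomain_single]
    rfl
  have h1 : Θ'.comp Θ = RingHom.id _ := by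
    refine MonoidAlgebra.ringHom_ext (fun b => ?_) (fun a => ?_)
    · rw [RingHom.comp_apply, hsingleΘ, hsingleΘ', RingHom.id_apply]
      simp
    · rw [RingHom.comp_apply, hsingleΘ, hsingleΘ', RingHom.id_apply]
      simp
  have h2 : Θ.comp Θ' = RingHom.id _ := by
    refine MonoidAlgebra.ringHom_ext (fun b => ?_) (fun a => ?_)
    · rw [RingHom.comp_apply, hsingleΘ', hsingleΘ, RingHom.id_apply]
      simp
    · rw [RingHom.comp_apply, hsingleΘ', hsingleΘ, RingHom.id_apply]
      simp
  have hΘinj : Function.Injective Θ := by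
    have : Function.LeftInverse Θ' Θ := fun z => by
      rw [← RingHom.comp_apply, h1, RingHom.id_apply]
    exact this.injective
  have hΘsurj : Function.Surjective Θ := by
    have : Function.RightInverse Θ' Θ := fun z => by
      rw [← RingHom.comp_apply, h2, RingHom.id_apply]
    exact this.surjective
  have hmem := jacobson_push Θ hΘsurj hy
  rw [jacobson_bot_monoidAlgebra_field hfin' hord', Ideal.mem_bot] at hmem
  rw [Ideal.mem_bot]
  exact hΘinj (hmem.trans (map_zero Θ).symm)

end FieldCase

/-- Let `R` be a commutative Artinian ring and `G` an abelian group in which every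
element has finite order, such that the order of every element of `G` is invertible
in `R/J(R)`.  Then the Jacobson radical of the group algebra `RG` equals the ideal
generated by `J(R)`, and this ideal is nilpotent. -/
theorem jacobson_monoidAlgebra_eq_map_jacobson
    (R : Type*) [CommRing R] [IsArtinianRing R]
    (G : Type*) [CommGroup G]
    (hfin : ∀ g : G, IsOfFinOrder g)
    (hinv : ∀ g : G, IsUnit ((orderOf g : ℕ) : R ⧸ (⊥ : Ideal R).jacobson)) :
    (⊥ : Ideal (MonoidAlgebra R G)).jacobson =
        Ideal.map (algebraMap R (MonoidAlgebra R G)) (⊥ : Ideal R).jacobson ∧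
      ∃ n : ℕ, 0 < n ∧
        (Ideal.map (algebraMap R (MonoidAlgebra R G)) (⊥ : Ideal R).jacobson) ^ n = ⊥ := by
  set J : Ideal R := (⊥ : Ideal R).jacobson with hJ
  set S := MonoidAlgebra R G with hS
  set I : Ideal S := J.map (algebraMap R S) with hI
  obtain ⟨n, hn⟩ := IsArtinianRing.isNilpotent_jacobson_bot (R := R)
  have hJn : J ^ (n + 1) = ⊥ := by
    have hn' : J ^ n = ⊥ := by rw [hJ, ← Ideal.zero_eq_bot]; exact hn
    rw [pow_succ, hn', Ideal.bot_mul]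
  have hIn : I ^ (n + 1) = ⊥ := by
    rw [hI, ← Ideal.map_pow, hJn, Ideal.map_bot]
  have hIle : I ≤ (⊥ : Ideal S).jacobson := by
    intro x hx
    have hnil : IsNilpotent x := ⟨n + 1, by
      have := Ideal.pow_mem_pow hx (n + 1)
      rwa [hIn, Ideal.mem_bot] at this⟩
    exact Ideal.radical_le_jacobson (mem_nilradical.mpr hnil)
  refine ⟨le_antisymm ?_ hIle, n + 1, n.succ_pos, hIn⟩
  intro x hx
  have hcoeff : ∀ g : G, x.coeff g ∈ J := by
    intro g
    show x.coeff g ∈ sInf {m : Ideal R | ⊥ ≤ m ∧ m.IsMaximal}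
    rw [Ideal.mem_sInf]
    rintro m ⟨-, hm⟩
    haveI := hm
    letI : Field (R ⧸ m) := Ideal.Quotient.field m
    set Φ : MonoidAlgebra R G →+* MonoidAlgebra (R ⧸ m) G :=
      mapCoeffHom (Ideal.Quotient.mk m) with hΦ
    have hΦsurj : Function.Surjective Φ :=
      mapCoeffHom_surjective Ideal.Quotient.mk_surjective
    have hxm : Φ x ∈ (⊥ : Ideal (MonoidAlgebra (R ⧸ m) G)).jacobson :=
      jacobson_push Φ hΦsurj hx
    have hJm : J ≤ m := sInf_le ⟨bot_le, hm⟩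
    have hordm : ∀ g : G, ((orderOf g : ℕ) : R ⧸ m) ≠ 0 := by
      intro g
      have := (hinv g).map (Ideal.Quotient.factor hJm)
      rw [map_natCast] at this
      exact this.ne_zero
    rw [jacobson_bot_monoidAlgebra_field' hfin hordm, Ideal.mem_bot] at hxm
    have hzero : (Φ x).coeff g = 0 := by rw [hxm]; rfl
    rw [mapCoeffHom_coeff] at hzero
    exact Ideal.Quotient.eq_zero_iff_mem.mp hzero
  have hrepr : x = x.coeff.sum MonoidAlgebra.single := (MonoidAlgebra.sum_coeff_single x).symm
  rw [hrepr, Finsupp.sum]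
  refine Ideal.sum_mem _ fun g _ => ?_
  have hsingle : (MonoidAlgebra.single g (x.coeff g) : MonoidAlgebra R G) =
      algebraMap R S (x.coeff g) * MonoidAlgebra.single g 1 := by
    rw [show (algebraMap R S) (x.coeff g) = MonoidAlgebra.single 1 (x.coeff g) by
      rw [MonoidAlgebra.coe_algebraMap]; simp]
    rw [MonoidAlgebra.single_mul_single, one_mul, mul_one]
  rw [hsingle]
  exact Ideal.mul_mem_right _ _ (Ideal.mem_map_of_mem _ (hcoeff g))
end

section
/- Let R be a commutative Artinian ring with unit and let G be an abelian group in which every element has finite order (equivalently, G is locally finite abelian), such that the order of every element of G is invertible in R/J(R), where J(R) is the Jacobson radical of R. Then the quotient RG/J(RG) of the group algebra RG by its Jacobson radical is a von Neumann regular ring. -/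
attribute [local instance] IsArtinianRing.fieldOfSubtypeIsMaximal

/-- In a commutative Artinian ring, every element is von Neumann regular
modulo nilpotents: the quotient by the nilradical is a finite product of fields. -/
theorem exists_isNilpotent_mul_mul_sub (S : Type*) [CommRing S] [IsArtinianRing S] (b : S) :
    ∃ x : S, IsNilpotent (b * x * b - b) := by
  let e := IsArtinianRing.quotNilradicalEquivPi S
  set c := e (Ideal.Quotient.mk _ b) with hc
  obtain ⟨x, hx⟩ := Ideal.Quotient.mk_surjective (I := nilradical S)
    (e.symm (fun I => (c I)⁻¹))
  refine ⟨x, ?_⟩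
  rw [← mem_nilradical, ← Ideal.Quotient.eq_zero_iff_mem, ← e.map_eq_zero_iff]
  have : e (Ideal.Quotient.mk _ x) = fun I => (c I)⁻¹ := by
    rw [hx, e.apply_symm_apply]
  simp only [map_sub, map_mul, this, ← hc]
  funext I
  rcases eq_or_ne (c I) 0 with h | h
  · change (e (Ideal.Quotient.mk _ b * Ideal.Quotient.mk _ x * Ideal.Quotient.mk _ b) - e (Ideal.Quotient.mk _ b)) I = 0; rw [map_mul, map_mul, this, ← hc]; simp [h]
  · change (e (Ideal.Quotient.mk _ b * Ideal.Quotient.mk _ x * Ideal.Quotient.mk _ b) - e (Ideal.Quotient.mk _ b)) I = 0; rw [map_mul, map_mul, this, ← hc]; simp [Pi.sub_apply, Pi.mul_apply, mul_inv_cancel₀ h, h]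

/-- Let `R` be a commutative Artinian ring and `G` an abelian group in which every
element has finite order, such that the order of every element of `G` is invertible
in `R/J(R)`.  Then the quotient of the group algebra `RG` by its Jacobson radical
is a von Neumann regular ring. -/
theorem monoidAlgebra_quotient_jacobson_vonNeumannRegular
    (R : Type*) [CommRing R] [IsArtinianRing R]
    (G : Type*) [CommGroup G]
    (hfin : ∀ g : G, IsOfFinOrder g)
    (hinv : ∀ g : G, IsUnit ((orderOf g : ℕ) : R ⧸ (⊥ : Ideal R).jacobson)) :
    ∀ a : MonoidAlgebra R G ⧸ (⊥ : Ideal (MonoidAlgebra R G)).jacobson,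
      ∃ x : MonoidAlgebra R G ⧸ (⊥ : Ideal (MonoidAlgebra R G)).jacobson,
        a * x * a = a := by
  intro a
  obtain ⟨f, rfl⟩ := Ideal.Quotient.mk_surjective a
  classical
  -- the (finite) subgroup generated by the support of a representative `f`
  set H : Subgroup G := Subgroup.closure (f.coeff.support : Set G) with hHdef
  have htor : Monoid.IsTorsion G := hfin
  haveI hHfin : Finite H := CommGroup.finite_of_fg_torsion _ (IsTorsion.subgroup htor H)
  -- the small group algebra `R[H]` is an Artinian ring
  haveI : IsArtinian R (MonoidAlgebra R H) := isArtinian_of_linearEquiv (MonoidAlgebra.coeffLinearEquiv R).symm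
  haveI : IsArtinianRing (MonoidAlgebra R H) :=
    isArtinian_of_tower R (inferInstanceAs (IsArtinian R (MonoidAlgebra R H)))
  set φ : MonoidAlgebra R H →+* MonoidAlgebra R G :=
    MonoidAlgebra.mapDomainRingHom R H.subtype with hφdef
  set f' : MonoidAlgebra R H := MonoidAlgebra.ofCoeff (Finsupp.subtypeDomain (· ∈ H) f.coeff) with hf'def
  have hφf : φ f' = f := by
    ext g
    show Finsupp.mapDomain (H.subtype) f'.coeff g = f.coeff g
    by_cases hg : g ∈ H
    · have := Finsupp.mapDomain_apply (f := (H.subtype : H → G))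
        (Subtype.val_injective) f'.coeff ⟨g, hg⟩
      simpa [hf'def, Finsupp.subtypeDomain_apply] using this
    · rw [Finsupp.mapDomain_notin_range]
      · exact (Finsupp.notMem_support_iff.mp
          (fun hs => hg (Subgroup.subset_closure hs))).symm
      · rintro ⟨⟨y, hy⟩, rfl⟩
        exact hg hy
  -- regularity modulo nilpotents in `R[H]`, pushed forward to `R[G]`
  obtain ⟨x', hx'⟩ := exists_isNilpotent_mul_mul_sub (MonoidAlgebra R H) f'
  refine ⟨Ideal.Quotient.mk _ (φ x'), ?_⟩
  have hnil : IsNilpotent (φ (f' * x' * f' - f')) := hx'.map φ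
  have hmem : φ (f' * x' * f' - f') ∈ (⊥ : Ideal (MonoidAlgebra R G)).jacobson :=
    Ideal.radical_le_jacobson (mem_nilradical.mpr hnil)
  have h0 : Ideal.Quotient.mk ((⊥ : Ideal (MonoidAlgebra R G)).jacobson)
      (φ (f' * x' * f' - f')) = 0 := Ideal.Quotient.eq_zero_iff_mem.mpr hmem
  rw [map_sub, map_mul, map_mul, hφf, map_sub, map_mul, map_mul, sub_eq_zero] at h0
  exact h0
end

section
/- Let R be a commutative Artinian ring with unit and let G be an abelian group in which every element has finite order (equivalently, G is locally finite abelian), such that the order of every element of G is invertible in R/J(R), where J(R) is the Jacobson radical of R. Then every nonzero RG-module has a maximal proper submodule; that is, the group algebra RG is a left max ring. -/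
universe v

open MonoidAlgebra

section MapRange

variable {k k' : Type*} [CommSemiring k] [CommSemiring k'] {G : Type*} [CommMonoid G]

/-- The ring homomorphism of monoid algebras induced by a ring homomorphism of
coefficients. -/
noncomputable def MonoidAlgebra.mapRangeRingHom' (G : Type*) [CommMonoid G] (f : k →+* k') :
    MonoidAlgebra k G →+* MonoidAlgebra k' G :=
  MonoidAlgebra.liftNCRingHom (MonoidAlgebra.singleOneRingHom.comp f) (MonoidAlgebra.of k' G)
    (fun _ _ => Commute.all _ _)

@[simp] lemma MonoidAlgebra.mapRangeRingHom'_single (f : k →+* k') (g : G) (b : k) :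
    MonoidAlgebra.mapRangeRingHom' G f (MonoidAlgebra.single g b) =
      MonoidAlgebra.single g (f b) := by
  show MonoidAlgebra.liftNC _ _ (MonoidAlgebra.single g b) = _
  rw [MonoidAlgebra.liftNC_single]
  show MonoidAlgebra.single (1 : G) (f b) * MonoidAlgebra.single g 1 = _
  rw [MonoidAlgebra.single_mul_single, one_mul, mul_one]

lemma MonoidAlgebra.mapRangeRingHom'_apply (f : k →+* k') (x : MonoidAlgebra k G)
    (g' : G) : (MonoidAlgebra.mapRangeRingHom' G f x).coeff g' = f (x.coeff g') := by
  classical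
  induction x using MonoidAlgebra.induction_linear with
  | zero => simp
  | add a b ha hb =>
      rw [map_add, MonoidAlgebra.coeff_add, MonoidAlgebra.coeff_add, Finsupp.add_apply,
        Finsupp.add_apply, ha, hb, map_add]
  | single g a =>
      rw [MonoidAlgebra.mapRangeRingHom'_single]
      show Finsupp.single g (f a) g' = f (Finsupp.single g a g')
      rw [Finsupp.single_apply, Finsupp.single_apply, apply_ite f, map_zero]

lemma MonoidAlgebra.mapRangeRingHom'_surjective (f : k →+* k') (hf : Function.Surjective f) :
    Function.Surjective (MonoidAlgebra.mapRangeRingHom' G f) := by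
  intro y
  induction y using MonoidAlgebra.induction with
  | zero => exact ⟨0, map_zero _⟩
  | single_add a b y _ _ ih =>
    obtain ⟨x, hx⟩ := ih
    obtain ⟨b₀, rfl⟩ := hf b
    exact ⟨MonoidAlgebra.single a b₀ + x, by
      rw [map_add, MonoidAlgebra.mapRangeRingHom'_single, hx]⟩

/-- The ring equivalence of monoid algebras induced by a ring equivalence of coefficients. -/
noncomputable def MonoidAlgebra.mapRangeRingEquiv' (G : Type*) [CommMonoid G] (f : k ≃+* k') :
    MonoidAlgebra k G ≃+* MonoidAlgebra k' G :=
  RingEquiv.ofRingHom (MonoidAlgebra.mapRangeRingHom' G (f : k →+* k'))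
    (MonoidAlgebra.mapRangeRingHom' G (f.symm : k' →+* k))
    (RingHom.ext fun x => by
      induction x using MonoidAlgebra.induction_linear with
      | zero => simp
      | add a b ha hb => simp only [RingHom.coe_comp, Function.comp_apply, map_add,
          RingHom.id_apply] at ha hb ⊢; rw [ha, hb]
      | single g a => simp)
    (RingHom.ext fun x => by
      induction x using MonoidAlgebra.induction_linear with
      | zero => simp
      | add a b ha hb => simp only [RingHom.coe_comp, Function.comp_apply, map_add,
          RingHom.id_apply] at ha hb ⊢; rw [ha, hb]
      | single g a => simp)

end MapRange

section Zorn

/-- If `P` is a maximal ideal and `m ∉ P • ⊤`, then `M` has a maximal proper submodule. -/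
theorem exists_isCoatom_of_notMem_smul {S : Type*} [CommRing S] {M : Type v} [AddCommGroup M]
    [Module S M] (P : Ideal S) (hP : P.IsMaximal) (m : M)
    (hm : m ∉ P • (⊤ : Submodule S M)) : ∃ N : Submodule S M, IsCoatom N := by
  set s : Set (Submodule S M) := {N | P • (⊤ : Submodule S M) ≤ N ∧ m ∉ N} with hs
  obtain ⟨N, -, hNs, hNmax⟩ := zorn_le_nonempty₀ s (fun c hcs hc y hy => by
      refine ⟨sSup c, ⟨le_trans (hcs hy).1 (le_sSup hy), fun hmem => ?_⟩, fun z hz => le_sSup hz⟩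
      obtain ⟨p, hpc, hmp⟩ := (Submodule.mem_sSup_of_directed ⟨y, hy⟩ hc.directedOn).1 hmem
      exact (hcs hpc).2 hmp)
    (P • ⊤) ⟨le_rfl, hm⟩
  have key : ∀ N' : Submodule S M, N < N' → m ∈ N' := by
    intro N' hlt
    by_contra hmN'
    exact hlt.not_ge (hNmax ⟨le_trans hNs.1 hlt.le, hmN'⟩ hlt.le)
  refine ⟨N, fun h => hNs.2 (h ▸ Submodule.mem_top), fun N' hlt => ?_⟩
  have hmN' : m ∈ N' := key N' hlt
  -- show N' = ⊤
  rw [Submodule.eq_top_iff']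
  intro u
  by_cases hu : u ∈ N
  · exact hlt.le hu
  · -- N + S•u contains m
    have h1 : m ∈ N ⊔ Submodule.span S {u} := by
      apply key
      refine lt_of_le_of_ne le_sup_left fun h => ?_
      exact hu (h ▸ Submodule.mem_sup_right (Submodule.mem_span_singleton_self u))
    obtain ⟨n, hn, z, hz, hnz⟩ := Submodule.mem_sup.1 h1
    obtain ⟨t, rfl⟩ := Submodule.mem_span_singleton.1 hz
    -- t ∉ P
    have htP : t ∉ P := by
      intro htP
      exact hNs.2 (hnz ▸ N.add_mem hn (hNs.1 (Submodule.smul_mem_smul htP Submodule.mem_top)))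
    -- invert t mod P
    obtain ⟨c, hc⟩ := hP.exists_inv htP
    obtain ⟨p, hp, hcp⟩ := hc
    -- u = c • (t • u) + (1 - c*t) • u with 1 - c*t = -p ∈ P
    have hu1 : u = c • (t • u) + (1 - c * t) • u := by
      rw [smul_smul, sub_smul, one_smul]; abel
    have h2 : (1 - c * t) • u ∈ N := by
      apply hNs.1
      have : (1 : S) - c * t = p := by linear_combination -hcp
      rw [this]
      exact Submodule.smul_mem_smul hp Submodule.mem_top
    have h3 : t • u = m - n := by rw [← hnz]; abel
    have : u ∈ N ⊔ Submodule.span S {m} := by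
      rw [hu1, h3, smul_sub]
      refine Submodule.add_mem _ (Submodule.sub_mem _ ?_ ?_) ?_
      · exact Submodule.mem_sup_right (Submodule.smul_mem _ c (Submodule.mem_span_singleton_self m))
      · exact Submodule.mem_sup_left (N.smul_mem c hn)
      · exact Submodule.mem_sup_left h2
    refine (sup_le hlt.le ?_ : N ⊔ Submodule.span S {m} ≤ N') this
    rwa [Submodule.span_singleton_le_iff_mem]

end Zorn

section FiniteSubgroup

variable {G : Type*} [CommGroup G]

theorem finite_closure_of_torsion (hfin : ∀ g : G, IsOfFinOrder g) (s : Finset G) :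
    (Subgroup.closure (s : Set G) : Set G).Finite := by
  classical
  induction s using Finset.induction with
  | empty => simp [Subgroup.closure_empty]
  | @insert a s ha ih =>
    rw [Finset.coe_insert, ← Set.singleton_union, Subgroup.closure_union,
      ← Subgroup.zpowers_eq_closure, Subgroup.mul_normal]
    exact Set.Finite.mul ((finite_zpowers).2 (hfin a)) ih

theorem isUnit_card_subgroup {k : Type*} [CommRing k] {G : Type*} [Group G]
    (hinv : ∀ g : G, IsUnit ((orderOf g : ℕ) : k)) (H : Subgroup G) [Fintype H] :
    IsUnit ((Fintype.card H : ℕ) : k) := by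
  have hcard : (Fintype.card H : ℕ) ≠ 0 := Fintype.card_ne_zero
  rw [← Nat.factorization_prod_pow_eq_self hcard]
  rw [Finsupp.prod, Nat.cast_prod]
  refine Finset.prod_induction _ IsUnit (fun a b ha hb => ha.mul hb) isUnit_one fun p hp => ?_
  have hpp : p.Prime := Nat.prime_of_mem_primeFactors (by rwa [Nat.support_factorization] at hp)
  have hpd : p ∣ Fintype.card H :=
    Nat.dvd_of_mem_primeFactors (by rwa [Nat.support_factorization] at hp)
  haveI : Fact p.Prime := ⟨hpp⟩
  obtain ⟨g, hg⟩ := exists_prime_orderOf_dvd_card p hpd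
  rw [Nat.cast_pow]
  refine IsUnit.pow _ ?_
  have := hinv (g : G)
  rwa [Subgroup.orderOf_coe, hg] at this

theorem exists_mapDomain_eq {k : Type*} [Semiring k] {G : Type*} [Group G] (H : Subgroup G)
    (f : MonoidAlgebra k G) (hs : ↑f.coeff.support ⊆ (H : Set G)) :
    ∃ f₀ : MonoidAlgebra k ↥H, MonoidAlgebra.mapDomain ((↑) : ↥H → G) f₀ = f := by
  classical
  induction f using MonoidAlgebra.induction with
  | zero => exact ⟨0, MonoidAlgebra.mapDomain_zero _⟩
  | single_add a b f haf hb ih =>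
    have hsupp : (MonoidAlgebra.single a b + f).coeff.support = insert a f.coeff.support := by
      rw [MonoidAlgebra.coeff_add, MonoidAlgebra.coeff_single, Finsupp.support_add_eq, Finsupp.support_single_ne_zero a hb]
      · rfl
      · rw [Finsupp.support_single_ne_zero a hb]
        simpa using haf
    rw [hsupp] at hs
    have haH : a ∈ H := hs (by simp)
    obtain ⟨f₀, hf₀⟩ := ih (fun x hx => hs (Finset.mem_insert_of_mem hx))
    refine ⟨MonoidAlgebra.single (⟨a, haH⟩ : ↥H) b + f₀, ?_⟩
    rw [MonoidAlgebra.mapDomain_add, MonoidAlgebra.mapDomain_single, hf₀]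

end FiniteSubgroup

section Semisimple

theorem exists_leftInverse_semisimple {k : Type*} [Ring k] [IsSemisimpleRing k]
    {V W : Type*} [AddCommGroup V] [AddCommGroup W] [Module k V] [Module k W]
    (f : V →ₗ[k] W) (hf : LinearMap.ker f = ⊥) :
    ∃ g : W →ₗ[k] V, g.comp f = LinearMap.id := by
  have hinj : Function.Injective f := LinearMap.ker_eq_bot.mp hf
  obtain ⟨q, hq⟩ := exists_isCompl (LinearMap.range f)
  refine ⟨(LinearEquiv.ofInjective f hinj).symm.toLinearMap ∘ₗ
    (LinearMap.range f).linearProjOfIsCompl q hq, ?_⟩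
  ext v
  have h1 : (LinearMap.range f).linearProjOfIsCompl q hq (f v)
      = ⟨f v, LinearMap.mem_range_self f v⟩ := by
    exact Submodule.linearProjOfIsCompl_apply_left hq ⟨f v, LinearMap.mem_range_self f v⟩
  simp only [LinearMap.coe_comp, Function.comp_apply, LinearMap.id_coe, id_eq,
    LinearEquiv.coe_coe, h1]
  exact (LinearEquiv.symm_apply_eq _).2 rfl

universe u

theorem maschke_exists_leftInverse {k : Type u} [CommRing k] [IsSemisimpleRing k]
    {G : Type u} [CommGroup G] [Fintype G] (hcard : IsUnit (Fintype.card G : k))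
    {V W : Type u} [AddCommGroup V] [AddCommGroup W]
    [Module (MonoidAlgebra k G) V] [Module (MonoidAlgebra k G) W]
    (f : V →ₗ[MonoidAlgebra k G] W) (hf : LinearMap.ker f = ⊥) :
    ∃ g : W →ₗ[MonoidAlgebra k G] V, g.comp f = LinearMap.id := by
  let A := MonoidAlgebra k G
  letI : Module k W := .compHom W (algebraMap k A)
  letI : Module k V := .compHom V (algebraMap k A)
  have : IsScalarTower k A W := ⟨fun r a w => by rw [Algebra.smul_def, mul_smul]; rfl⟩
  have : IsScalarTower k A V := ⟨fun r a w => by rw [Algebra.smul_def, mul_smul]; rfl⟩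
  obtain ⟨φ, hφ⟩ := exists_leftInverse_semisimple (f.restrictScalars k) <| by
    simp only [hf, Submodule.restrictScalars_bot, LinearMap.ker_restrictScalars]
  refine ⟨φ.equivariantProjection G, DFunLike.ext _ _ ?_⟩
  exact fun v => φ.equivariantProjection_condition G _ (by rwa [Nat.card_eq_fintype_card]) (DFunLike.congr_fun hφ) v

theorem isSemisimpleRing_monoidAlgebra_aux {k : Type u} [CommRing k] [IsSemisimpleRing k]
    {G : Type u} [CommGroup G] [Fintype G] (hcard : IsUnit (Fintype.card G : k)) :
    IsSemisimpleRing (MonoidAlgebra k G) := by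
  refine { exists_isCompl := ?_ }
  intro p
  obtain ⟨g, hg⟩ := maschke_exists_leftInverse hcard p.subtype p.ker_subtype
  exact ⟨LinearMap.ker g, LinearMap.isCompl_of_proj <| DFunLike.congr_fun hg⟩

theorem isSemisimpleRing_monoidAlgebra {k : Type*} [CommRing k] [IsSemisimpleRing k]
    {G : Type*} [CommGroup G] [Fintype G] (hcard : IsUnit (Fintype.card G : k)) :
    IsSemisimpleRing (MonoidAlgebra k G) := by
  let k' := ULift.{max u_1 u_2} k
  let G' := ULift.{max u_1 u_2} G
  haveI : IsSemisimpleRing k' := (ULift.ringEquiv : k' ≃+* k).symm.isSemisimpleRing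
  have hcard' : IsUnit (Fintype.card G' : k') := by
    have : (Fintype.card G' : k') = (ULift.ringEquiv : k' ≃+* k).symm (Fintype.card G : k) := by
      rw [map_natCast, Fintype.card_ulift]
    rw [this]
    exact hcard.map _
  have hss : IsSemisimpleRing (MonoidAlgebra k' G') :=
    isSemisimpleRing_monoidAlgebra_aux hcard'
  have e : MonoidAlgebra k' G' ≃+* MonoidAlgebra k G :=
    (MonoidAlgebra.mapRangeRingEquiv' G' (ULift.ringEquiv : k' ≃+* k)).trans
      (MonoidAlgebra.domCongr k k (MulEquiv.ulift : G' ≃* G)).toRingEquiv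
  exact e.isSemisimpleRing

end Semisimple

section VNR

variable {k : Type*} [CommRing k] [IsSemisimpleRing k]
variable {G : Type*} [CommGroup G]

theorem monoidAlgebra_exists_vnr (hfin : ∀ g : G, IsOfFinOrder g)
    (hinv : ∀ g : G, IsUnit ((orderOf g : ℕ) : k)) (x : MonoidAlgebra k G) :
    ∃ y : MonoidAlgebra k G, x * y * x = x := by
  classical
  set H : Subgroup G := Subgroup.closure (x.coeff.support : Set G) with hH
  have hHfin : (H : Set G).Finite := finite_closure_of_torsion hfin x.coeff.support
  haveI : Fintype ↥H := hHfin.fintype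
  have hcard : IsUnit ((Fintype.card ↥H : ℕ) : k) := isUnit_card_subgroup hinv H
  haveI : IsSemisimpleRing (MonoidAlgebra k ↥H) := isSemisimpleRing_monoidAlgebra hcard
  obtain ⟨x₀, hx₀⟩ := exists_mapDomain_eq H x (Subgroup.subset_closure)
  obtain ⟨e, he, hspan⟩ :=
    IsSemisimpleRing.ideal_eq_span_idempotent (Ideal.span {x₀} : Ideal (MonoidAlgebra k ↥H))
  have hx₀e : ∃ c, c * e = x₀ := by
    have : x₀ ∈ Ideal.span ({e} : Set (MonoidAlgebra k ↥H)) :=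
      hspan ▸ Ideal.subset_span rfl
    exact Ideal.mem_span_singleton'.1 this
  have hex₀ : ∃ y₀, y₀ * x₀ = e := by
    have : e ∈ Ideal.span ({x₀} : Set (MonoidAlgebra k ↥H)) :=
      hspan ▸ Ideal.subset_span rfl
    exact Ideal.mem_span_singleton'.1 this
  obtain ⟨c, hc⟩ := hx₀e
  obtain ⟨y₀, hy₀⟩ := hex₀
  have key : x₀ * y₀ * x₀ = x₀ := by
    have h1 : x₀ * e = x₀ := by
      rw [← hc]; rw [mul_assoc, he]
    calc x₀ * y₀ * x₀ = y₀ * x₀ * x₀ := by ring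
    _ = e * x₀ := by rw [hy₀]
    _ = x₀ := by rw [mul_comm, h1]
  let ψ : MonoidAlgebra k ↥H →+* MonoidAlgebra k G :=
    MonoidAlgebra.mapDomainRingHom k H.subtype
  have hψx : ψ x₀ = x := hx₀
  refine ⟨ψ y₀, ?_⟩
  rw [← hψx, ← map_mul, ← map_mul, key]

/-- A finitely generated ideal of a von Neumann regular commutative ring has an
"identity-like" generator. -/
theorem exists_idem_span (hfin : ∀ g : G, IsOfFinOrder g)
    (hinv : ∀ g : G, IsUnit ((orderOf g : ℕ) : k)) (s : Finset (MonoidAlgebra k G)) :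
    ∃ e : MonoidAlgebra k G, e ∈ Ideal.span (s : Set (MonoidAlgebra k G)) ∧ e * e = e ∧
      ∀ p ∈ s, e * p = p := by
  classical
  induction s using Finset.induction with
  | empty => exact ⟨0, Ideal.zero_mem _, by ring, fun p hp => absurd hp (Finset.notMem_empty p)⟩
  | @insert a s ha ih =>
    obtain ⟨e₁, he₁span, he₁idem, he₁⟩ := ih
    obtain ⟨y, hy⟩ := monoidAlgebra_exists_vnr hfin hinv a
    have he₂idem : (a * y) * (a * y) = a * y := by linear_combination y * hy
    have he₂a : (a * y) * a = a := hy
    refine ⟨e₁ + a * y - e₁ * (a * y), ?_, ?_, ?_⟩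
    · have h1 : e₁ ∈ Ideal.span (insert a (s : Set (MonoidAlgebra k G))) :=
        Ideal.span_mono (Set.subset_insert _ _) he₁span
      have h2 : a * y ∈ Ideal.span (insert a (s : Set (MonoidAlgebra k G))) :=
        Ideal.mul_mem_right _ _ (Ideal.subset_span (Set.mem_insert _ _))
      rw [Finset.coe_insert]
      exact Submodule.sub_mem _ (Submodule.add_mem _ h1 h2) (Ideal.mul_mem_right _ _ h1)
    · linear_combination (1 - a * y) ^ 2 * he₁idem + (1 - e₁) * he₂idem
    · intro p hp
      rcases Finset.mem_insert.1 hp with rfl | hps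
      · linear_combination (1 - e₁) * he₂a
      · linear_combination (1 - a * y) * he₁ p hps

end VNR

/-- Let `R` be a commutative Artinian ring and `G` an abelian group in which every
element has finite order, such that the order of every element of `G` is invertible
in `R/J(R)`.  Then every nonzero module over the group algebra `RG` has a maximal
proper submodule, i.e. `RG` is a left max ring. -/
theorem monoidAlgebra_isLeftMaxRing_of_locallyFinite_abelian
    (R : Type*) [CommRing R] [IsArtinianRing R]
    (G : Type*) [CommGroup G]
    (hfin : ∀ g : G, IsOfFinOrder g)
    (hinv : ∀ g : G, IsUnit ((orderOf g : ℕ) : R ⧸ (⊥ : Ideal R).jacobson)) :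
    ∀ (M : Type v) [AddCommGroup M] [Module (MonoidAlgebra R G) M],
      Nontrivial M → ∃ N : Submodule (MonoidAlgebra R G) M, IsCoatom N := by
  intro M _ _ hM
  classical
  -- the Jacobson radical is nilpotent and equals the nilradical
  have hJnil : IsNilpotent ((⊥ : Ideal R).jacobson) := IsArtinianRing.isNilpotent_jacobson_bot
  obtain ⟨n, hn⟩ := hJnil
  have hJeq : (⊥ : Ideal R).jacobson = nilradical R := by
    apply le_antisymm
    · intro x hx
      rw [mem_nilradical]
      refine ⟨n, ?_⟩
      have : x ^ n ∈ ((⊥ : Ideal R).jacobson) ^ n := Ideal.pow_mem_pow hx n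
      rw [hn] at this
      simpa using this
    · exact Ideal.radical_le_jacobson
  -- the quotient is a semisimple ring
  haveI : IsReduced (R ⧸ (⊥ : Ideal R).jacobson) := by
    rw [← Ideal.isRadical_iff_quotient_reduced]
    rw [hJeq]
    exact Ideal.radical_isRadical (⊥ : Ideal R)
  haveI : IsSemisimpleRing (R ⧸ (⊥ : Ideal R).jacobson) :=
    IsArtinianRing.isSemisimpleRing_of_isReduced _
  -- the reduction homomorphism on group algebras
  let φ : MonoidAlgebra R G →+* MonoidAlgebra (R ⧸ (⊥ : Ideal R).jacobson) G :=
    MonoidAlgebra.mapRangeRingHom' G (Ideal.Quotient.mk ((⊥ : Ideal R).jacobson))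
  have hφs : Function.Surjective φ :=
    MonoidAlgebra.mapRangeRingHom'_surjective _ Ideal.Quotient.mk_surjective
  -- the kernel of φ is contained in the extension of J, hence nilpotent
  have hIle : RingHom.ker φ ≤
      Ideal.map (algebraMap R (MonoidAlgebra R G)) ((⊥ : Ideal R).jacobson) := by
    intro x hx
    have hcoeff : ∀ g : G, x.coeff g ∈ (⊥ : Ideal R).jacobson := by
      intro g
      have h0 : (φ x).coeff g = 0 := by
        rw [RingHom.mem_ker] at hx
        rw [hx]
        rfl
      rw [MonoidAlgebra.mapRangeRingHom'_apply] at h0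
      exact Ideal.Quotient.eq_zero_iff_mem.1 h0
    have hrepr : x = ∑ g ∈ x.coeff.support, MonoidAlgebra.single g (x.coeff g) := by
      conv_lhs => rw [← MonoidAlgebra.sum_coeff_single x]
      rfl
    rw [hrepr]
    refine Submodule.sum_mem _ fun g hg => ?_
    have hsg : MonoidAlgebra.single g (x.coeff g) =
        MonoidAlgebra.single g 1 * algebraMap R (MonoidAlgebra R G) (x.coeff g) := by
      rw [MonoidAlgebra.coe_algebraMap]
      show _ = MonoidAlgebra.single g 1 * MonoidAlgebra.single 1 (x.coeff g)
      rw [MonoidAlgebra.single_mul_single, mul_one, one_mul]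
    rw [hsg]
    exact Ideal.mul_mem_left _ _ (Ideal.mem_map_of_mem _ (hcoeff g))
  have hInil : (RingHom.ker φ) ^ n = ⊥ := by
    have h1 : (RingHom.ker φ) ^ n ≤
        (Ideal.map (algebraMap R (MonoidAlgebra R G)) ((⊥ : Ideal R).jacobson)) ^ n :=
      Ideal.pow_right_mono hIle n
    rw [← Ideal.map_pow, hn, Ideal.zero_eq_bot, Ideal.map_bot] at h1
    exact le_bot_iff.1 h1
  -- there is an element outside of (ker φ) • M
  have hIM : (RingHom.ker φ • ⊤ : Submodule (MonoidAlgebra R G) M) ≠ ⊤ := by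
    intro htop
    have hj : ∀ j : ℕ, ((RingHom.ker φ) ^ j • ⊤ : Submodule (MonoidAlgebra R G) M) = ⊤ := by
      intro j
      induction j with
      | zero => rw [pow_zero, Ideal.one_eq_top, Submodule.top_smul]
      | succ j ih =>
        rw [pow_succ, ← smul_eq_mul, Submodule.smul_assoc, htop, ih]
    have h0 := hj n
    rw [hInil, Submodule.bot_smul] at h0
    exact absurd h0 bot_ne_top
  obtain ⟨m, hm⟩ : ∃ m : M, m ∉ (RingHom.ker φ • ⊤ : Submodule (MonoidAlgebra R G) M) := by
    by_contra h
    push_neg at h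
    exact hIM (Submodule.eq_top_iff'.2 h)
  -- the colon ideal A = (ker φ • M : m)
  set A : Ideal (MonoidAlgebra R G) :=
    Submodule.comap (LinearMap.toSpanSingleton (MonoidAlgebra R G) M m)
      (RingHom.ker φ • ⊤) with hAdef
  have hmemA : ∀ s : MonoidAlgebra R G,
      s ∈ A ↔ s • m ∈ (RingHom.ker φ • ⊤ : Submodule (MonoidAlgebra R G) M) := by
    intro s
    rw [hAdef, Submodule.mem_comap, LinearMap.toSpanSingleton_apply]
  have hAI : RingHom.ker φ ≤ A := fun s hs =>
    (hmemA s).2 (Submodule.smul_mem_smul hs Submodule.mem_top)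
  have hAne : A ≠ ⊤ := by
    intro h
    apply hm
    have h1 : (1 : MonoidAlgebra R G) ∈ A := h ▸ Submodule.mem_top
    rw [hmemA, one_smul] at h1
    exact h1
  obtain ⟨P, hPmax, hAP⟩ := Ideal.exists_le_maximal A hAne
  -- key step: m ∉ P • M
  have hmP : m ∉ (P • ⊤ : Submodule (MonoidAlgebra R G) M) := by
    intro hmem
    rw [show (⊤ : Submodule (MonoidAlgebra R G) M)
        = Submodule.span (MonoidAlgebra R G) (Set.range (id : M → M)) by
      rw [Set.range_id, Submodule.span_univ]] at hmem
    rw [Submodule.mem_ideal_smul_span_iff_exists_sum] at hmem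
    obtain ⟨a, haP, hsum⟩ := hmem
    simp only [id_eq] at hsum
    -- find an idempotent-like element modulo ker φ
    obtain ⟨e', he'span, -, he'⟩ :=
      exists_idem_span hfin hinv (a.support.image fun i => φ (a i))
    obtain ⟨e, rfl⟩ := hφs e'
    have heP : e ∈ P := by
      have h1 : φ e ∈ Ideal.map φ (Ideal.span ((fun i => a i) '' a.support)) := by
        rw [Ideal.map_span]
        refine Ideal.span_mono ?_ he'span
        intro t ht
        rw [Finset.coe_image] at ht
        obtain ⟨i, hi, rfl⟩ := ht
        exact ⟨a i, ⟨i, hi, rfl⟩, rfl⟩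
      have h2 : e ∈ Ideal.comap φ (Ideal.map φ (Ideal.span ((fun i => a i) '' a.support))) := h1
      rw [Ideal.comap_map_of_surjective φ hφs] at h2
      have h3 : Ideal.span ((fun i => a i) '' ↑a.support) ⊔ Ideal.comap φ ⊥ ≤ P := by
        refine sup_le ?_ ?_
        · rw [Ideal.span_le]
          rintro t ⟨i, hi, rfl⟩
          exact haP i
        · intro t ht
          refine hAP (hAI ?_)
          simpa [RingHom.mem_ker] using ht
      exact h3 h2
    have h1me : (1 : MonoidAlgebra R G) - e ∈ A := by
      rw [hmemA, sub_smul, one_smul]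
      rw [Finsupp.sum] at hsum
      rw [← hsum, Finset.smul_sum]
      have hterm : ∀ i ∈ a.support,
          a i • i - e • (a i • i) = (a i - e * a i) • i := by
        intro i hi
        rw [smul_smul, sub_smul]
      rw [← Finset.sum_sub_distrib]
      rw [Finset.sum_congr rfl hterm]
      refine Submodule.sum_mem _ fun i hi => ?_
      have hker : a i - e * a i ∈ RingHom.ker φ := by
        rw [RingHom.mem_ker, map_sub, map_mul]
        have := he' (φ (a i)) (Finset.mem_image_of_mem _ hi)
        rw [this]
        ring
      exact Submodule.smul_mem_smul hker Submodule.mem_top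
    have hone : (1 : MonoidAlgebra R G) ∈ P := by
      have := P.add_mem (hAP h1me) heP
      simpa using this
    exact hPmax.ne_top ((Ideal.eq_top_iff_one P).2 hone)
  exact exists_isCoatom_of_notMem_smul P hPmax m hmP
end
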